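/- Let p, q be positive integers and α : (ZMod p) × (ZMod q) → ℝ with α(0,0) = 0 and α(m,n) > 0 for all (m,n) ≠ (0,0). Consider the continuous-time Markov chain on the state space (ZMod p) × (ZMod q) with transition intensities q_{x,y} = α(y − x) for x ≠ y and uniform stationary measure π_x = 1/(pq). Then its classical entropy production rate equals the quantum one: (1/2) Σ_{x ≠ y} (π_x q_{x,y} − π_y q_{y,x}) · log( (π_x q_{x,y}) / (π_y q_{y,x}) ) = (1/2) Σ_{(m,n) ≠ (0,0)} (α(m,n) − α(-m,-n)) · log( α(m,n) / α(-m,-n) ), where both sums run over (ZMod p) × (ZMod q) and subtraction of states is componentwise in ZMod p and ZMod q. -/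

import Mathlib

noncomputable section

/-- The classical entropy production rate of the circulant Markov chain on
`(ZMod p) × (ZMod q)` with intensities `q_{x,y} = α(y - x)` and uniform stationary
measure `π = 1/(pq)` equals the quantum entropy production rate. -/
theorem stmt16 (p q : ℕ) [NeZero p] [NeZero q]
    (α : ZMod p × ZMod q → ℝ) (h0 : α (0, 0) = 0)
    (hpos : ∀ mn : ZMod p × ZMod q, mn ≠ (0, 0) → 0 < α mn) :
    (1 / 2) * ∑ x : ZMod p × ZMod q, ∑ y ∈ Finset.univ.erase x,
        ((1 / ((p : ℝ) * q)) * α (y - x) - (1 / ((p : ℝ) * q)) * α (x - y)) *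
          Real.log (((1 / ((p : ℝ) * q)) * α (y - x)) /
            ((1 / ((p : ℝ) * q)) * α (x - y))) =
      (1 / 2) * ∑ mn ∈ Finset.univ.erase ((0 : ZMod p), (0 : ZMod q)),
        (α mn - α (-mn)) * Real.log (α mn / α (-mn)) := by
  have hp : (p : ℝ) ≠ 0 := Nat.cast_ne_zero.2 (NeZero.ne p)
  have hq : (q : ℝ) ≠ 0 := Nat.cast_ne_zero.2 (NeZero.ne q)
  have hc0 : (1 / ((p : ℝ) * q)) ≠ 0 := by
    simp [hp, hq]
  have key : ∀ x : ZMod p × ZMod q, (∑ y ∈ Finset.univ.erase x,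
      ((1 / ((p : ℝ) * q)) * α (y - x) - (1 / ((p : ℝ) * q)) * α (x - y)) *
        Real.log (((1 / ((p : ℝ) * q)) * α (y - x)) /
          ((1 / ((p : ℝ) * q)) * α (x - y))))
      = (1 / ((p : ℝ) * q)) * ∑ mn ∈ Finset.univ.erase ((0 : ZMod p), (0 : ZMod q)),
        (α mn - α (-mn)) * Real.log (α mn / α (-mn)) := by
    intro x
    rw [Finset.mul_sum]
    refine Finset.sum_nbij' (fun y => y - x) (fun z => z + x) ?_ ?_ ?_ ?_ ?_
    · intro y hy
      simp only [Finset.mem_erase, Finset.mem_univ, and_true] at hy ⊢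
      intro h
      apply hy
      have : y - x = 0 := by rw [h]; rfl
      exact sub_eq_zero.mp this
    · intro z hz
      simp only [Finset.mem_erase, Finset.mem_univ, and_true] at hz ⊢
      intro h
      apply hz
      have : z = 0 := by rwa [add_eq_right] at h
      rw [this]; rfl
    · intro y _; simp
    · intro z _; simp
    · intro y _
      have h1 : x - y = -(y - x) := by ring
      rw [h1, mul_div_mul_left _ _ hc0, ← mul_sub]
      ring
  rw [Finset.sum_congr rfl (fun x _ => key x), Finset.sum_const, Finset.card_univ,
    Fintype.card_prod, ZMod.card, ZMod.card, nsmul_eq_mul]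
  push_cast
  field_simp
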